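/- (Refined upper bound on the relaxed join; Theorem 6.7, size bound) Let V be a finite set, E a finite family of m subsets of V, R_e a finite relation on attribute set e for each e ∈ E, and 0 ≤ r ≤ m an integer. Let 𝒞(q,r) = { S ⊆ E : |S| ≥ m−r and ⋃_{e∈S} e = V }, Ĉ(q,r) its set of inclusion-minimal elements, and q_r the relaxed join. Suppose that for each S ∈ Ĉ(q,r) we are given a subset T(S) ⊆ S with ⋃_{e∈T(S)} e = V together with a fractional edge cover y^S of the hypergraph (V, T(S)), in such a way that whenever T(S) = T(S′) one has y^S = y^{S′}. Then |q_r| ≤ ∑_{T} ∏_{e∈T} |R_e|^{y^T_e}, where the sum ranges over the distinct sets T in { T(S) : S ∈ Ĉ(q,r) } and y^T denotes the common cover associated with T. -/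

import Mathlib

open Finset NNReal

lemma my_sum_rpow_le {α : Type*} (s : Finset α) (a : α → ℝ≥0) {p : ℝ} (hp : 1 ≤ p) :
    ∑ o ∈ s, a o ^ p ≤ (∑ o ∈ s, a o) ^ p := by
  induction s using Finset.cons_induction with
  | empty => simp [NNReal.zero_rpow (one_pos.trans_le hp).ne']
  | cons x s hx ih =>
    rw [Finset.sum_cons, Finset.sum_cons]
    exact le_trans (by gcongr) (NNReal.add_rpow_le_rpow_add _ _ hp)

lemma my_holder_one {α ι : Type*} (s : Finset α) (I : Finset ι) (w : ι → ℝ≥0)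
    (a : ι → α → ℝ≥0) (hw1 : ∑ i ∈ I, w i = 1) :
    ∑ o ∈ s, ∏ i ∈ I, a i o ^ (w i : ℝ) ≤ ∏ i ∈ I, (∑ o ∈ s, a i o) ^ (w i : ℝ) := by
  classical
  set A : ι → ℝ≥0 := fun i => ∑ o ∈ s, a i o with hA
  by_cases hz : ∃ i ∈ I, A i = 0 ∧ w i ≠ 0
  · obtain ⟨i, hi, hAi, hwi⟩ := hz
    have ha0 : ∀ o ∈ s, a i o = 0 := fun o ho => by
      have := Finset.sum_eq_zero_iff.mp hAi
      exact this o ho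
    have hzero : ∀ o ∈ s, ∏ j ∈ I, a j o ^ (w j : ℝ) = 0 := by
      intro o ho
      apply Finset.prod_eq_zero hi
      rw [ha0 o ho, NNReal.zero_rpow (by exact_mod_cast hwi)]
    rw [Finset.sum_eq_zero hzero]
    exact zero_le
  · push_neg at hz
    have key : ∀ o ∈ s, ∏ i ∈ I, a i o ^ (w i : ℝ)
        = (∏ i ∈ I, (a i o / A i) ^ (w i : ℝ)) * ∏ i ∈ I, A i ^ (w i : ℝ) := by
      intro o ho
      rw [← Finset.prod_mul_distrib]
      refine Finset.prod_congr rfl fun i hi => ?_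
      rw [← NNReal.mul_rpow]
      by_cases h : A i = 0
      · rw [hz i hi h]; simp
      · rw [div_mul_cancel₀ _ h]
    have step1 : ∑ o ∈ s, ∏ i ∈ I, (a i o / A i) ^ (w i : ℝ) ≤ 1 := by
      calc ∑ o ∈ s, ∏ i ∈ I, (a i o / A i) ^ (w i : ℝ)
          ≤ ∑ o ∈ s, ∑ i ∈ I, w i * (a i o / A i) :=
            Finset.sum_le_sum fun o ho =>
              NNReal.geom_mean_le_arith_mean_weighted I w _ hw1
        _ = ∑ i ∈ I, w i * ∑ o ∈ s, a i o / A i := by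
            rw [Finset.sum_comm]
            exact Finset.sum_congr rfl fun i hi => by rw [Finset.mul_sum]
        _ ≤ ∑ i ∈ I, w i * 1 := by
            refine Finset.sum_le_sum fun i hi => ?_
            by_cases h : A i = 0
            · rw [hz i hi h]; simp
            · rw [← Finset.sum_div, div_self h]
        _ = 1 := by simp only [mul_one]; exact hw1
    calc ∑ o ∈ s, ∏ i ∈ I, a i o ^ (w i : ℝ)
        = (∑ o ∈ s, ∏ i ∈ I, (a i o / A i) ^ (w i : ℝ)) * ∏ i ∈ I, A i ^ (w i : ℝ) := by
          rw [Finset.sum_mul]; exact Finset.sum_congr rfl key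
      _ ≤ 1 * ∏ i ∈ I, A i ^ (w i : ℝ) := by gcongr
      _ = _ := one_mul _

lemma my_holder {α ι : Type*} (s : Finset α) (I : Finset ι) (w : ι → ℝ≥0)
    (a : ι → α → ℝ≥0) (hw1 : 1 ≤ ∑ i ∈ I, w i) :
    ∑ o ∈ s, ∏ i ∈ I, a i o ^ (w i : ℝ) ≤ ∏ i ∈ I, (∑ o ∈ s, a i o) ^ (w i : ℝ) := by
  classical
  set c : ℝ≥0 := ∑ i ∈ I, w i with hc
  have hc0 : c ≠ 0 := (lt_of_lt_of_le one_pos hw1).ne'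
  have hsum : ∑ i ∈ I, w i / c = 1 := by rw [← Finset.sum_div, div_self hc0]
  have hpow : ∀ (x : ℝ≥0) i, x ^ (w i : ℝ) = (x ^ ((w i / c : ℝ≥0) : ℝ)) ^ (c : ℝ) := by
    intro x i
    rw [← NNReal.rpow_mul]
    congr 1
    rw [NNReal.coe_div]
    field_simp
  calc ∑ o ∈ s, ∏ i ∈ I, a i o ^ (w i : ℝ)
      = ∑ o ∈ s, (∏ i ∈ I, a i o ^ ((w i / c : ℝ≥0) : ℝ)) ^ (c : ℝ) := by
        refine Finset.sum_congr rfl fun o ho => ?_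
        rw [← NNReal.finset_prod_rpow]
        exact Finset.prod_congr rfl fun i hi => hpow _ i
    _ ≤ (∑ o ∈ s, ∏ i ∈ I, a i o ^ ((w i / c : ℝ≥0) : ℝ)) ^ (c : ℝ) :=
        my_sum_rpow_le _ _ (by exact_mod_cast hw1)
    _ ≤ (∏ i ∈ I, (∑ o ∈ s, a i o) ^ ((w i / c : ℝ≥0) : ℝ)) ^ (c : ℝ) := by
        gcongr
        exact my_holder_one s I _ a hsum
    _ = ∏ i ∈ I, (∑ o ∈ s, a i o) ^ (w i : ℝ) := by
        rw [← NNReal.finset_prod_rpow]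
        exact Finset.prod_congr rfl fun i hi => (hpow _ i).symm

lemma my_sum_card_filter_le {β γ : Type*} [DecidableEq γ] (s : Finset β) (g : β → γ)
    (Ω : Finset γ) :
    ∑ o ∈ Ω, (s.filter (fun x => g x = o)).card ≤ s.card := by
  classical
  have h := Finset.card_eq_sum_card_fiberwise
    (f := g) (s := s.filter (fun x => g x ∈ Ω)) (t := Ω)
    (fun x hx => (Finset.mem_filter.mp hx).2)
  have heq : ∀ o ∈ Ω, ((s.filter (fun x => g x ∈ Ω)).filter (fun x => g x = o))
      = s.filter (fun x => g x = o) := by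
    intro o ho
    rw [Finset.filter_filter]
    apply Finset.filter_congr
    intro x hx
    constructor
    · exact fun h' => h'.2
    · exact fun h' => ⟨h' ▸ ho, h'⟩
  calc ∑ o ∈ Ω, (s.filter (fun x => g x = o)).card
      = (s.filter (fun x => g x ∈ Ω)).card := by
        rw [h]; exact Finset.sum_congr rfl fun o ho => by rw [heq o ho]
    _ ≤ s.card := Finset.card_le_card (Finset.filter_subset _ _)

lemma my_ncard_biUnion_le {α β : Type*} (s : Finset α) (f : α → Set β) :
    (⋃ a ∈ s, f a).ncard ≤ ∑ a ∈ s, (f a).ncard := by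
  classical
  induction s using Finset.cons_induction with
  | empty => simp
  | cons x s hx ih =>
    rw [Finset.sum_cons, Finset.cons_eq_insert, Finset.set_biUnion_insert]
    exact le_trans (Set.ncard_union_le _ _) (by omega)
open Finset NNReal

lemma agm_count {V D ι : Type*} [DecidableEq V]
    (e : ι → Finset V) (T : Finset ι) (y : ι → ℝ) (hy0 : ∀ i ∈ T, 0 ≤ y i)
    (U : Finset V)
    (hcov : ∀ v ∈ U, 1 ≤ ∑ i ∈ T.filter (fun i => v ∈ e i), y i)
    (Q : ι → Finset (V → Option D)) (J : Finset (V → Option D))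
    (hJ : ∀ f ∈ J, (∀ v, f v ≠ none ↔ v ∈ U) ∧
      ∀ i ∈ T, (fun v => if v ∈ e i then f v else none) ∈ Q i) :
    (J.card : ℝ≥0) ≤ ∏ i ∈ T, ((Q i).card : ℝ≥0) ^ y i := by
  classical
  induction U using Finset.induction_on generalizing Q J with
  | empty =>
    rcases Finset.eq_empty_or_nonempty J with hJe | ⟨f0, hf0⟩
    · simp [hJe]
    · have hQ : ∀ i ∈ T, (1 : ℝ≥0) ≤ ((Q i).card : ℝ≥0) := by
        intro i hi
        have h1 : (Q i).Nonempty := ⟨_, (hJ f0 hf0).2 i hi⟩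
        exact_mod_cast Finset.card_pos.mpr h1
      have hcard : J.card ≤ 1 := by
        refine Finset.card_le_one.mpr fun f hf g hg => funext fun v => ?_
        have h1 := (hJ f hf).1 v
        have h2 := (hJ g hg).1 v
        simp only [Finset.notMem_empty, iff_false, not_not] at h1 h2
        rw [h1, h2]
      calc (J.card : ℝ≥0) ≤ 1 := by exact_mod_cast hcard
        _ ≤ ∏ i ∈ T, ((Q i).card : ℝ≥0) ^ y i :=
          Finset.one_le_prod' fun i hi => by
            calc (1 : ℝ≥0) = 1 ^ y i := (NNReal.one_rpow _).symm
              _ ≤ ((Q i).card : ℝ≥0) ^ y i := NNReal.rpow_le_rpow (hQ i hi) (hy0 i hi)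
  | @insert v U' hv IH =>
    set I := T.filter (fun i => v ∈ e i) with hI
    have hs : 1 ≤ ∑ i ∈ I, y i := hcov v (Finset.mem_insert_self v U')
    set Ω : Finset (Option D) := J.image (fun f => f v) with hΩ
    set ε : (V → Option D) → (V → Option D) := fun f => Function.update f v none with hε
    set Qn : Option D → ι → Finset (V → Option D) := fun o i =>
      if v ∈ e i then ((Q i).filter (fun g => g v = o)).image ε else Q i with hQn
    -- injectivity of ε on sets with fixed value at v
    have hinj : ∀ (o : Option D) (s : Finset (V → Option D)),
        Set.InjOn ε (s.filter (fun g => g v = o)) := by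
      intro o s f hf g hg hfg
      have hfv : f v = o := (Finset.mem_filter.mp hf).2
      have hgv : g v = o := (Finset.mem_filter.mp hg).2
      funext w
      by_cases hw : w = v
      · rw [hw, hfv, hgv]
      · have := congrFun hfg w
        simpa [hε, Function.update_of_ne hw] using this
    -- fiberwise decomposition of J
    have hJcard : J.card = ∑ o ∈ Ω, (J.filter (fun f => f v = o)).card :=
      Finset.card_eq_sum_card_fiberwise fun f hf => Finset.mem_image_of_mem _ hf
    -- per-fiber bound via IH
    have hfib : ∀ o ∈ Ω, ((J.filter (fun f => f v = o)).card : ℝ≥0)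
        ≤ ∏ i ∈ T, ((Qn o i).card : ℝ≥0) ^ y i := by
      intro o ho
      have hcardeq : (J.filter (fun f => f v = o)).card
          = ((J.filter (fun f => f v = o)).image ε).card :=
        (Finset.card_image_of_injOn (hinj o J)).symm
      rw [hcardeq]
      refine IH (fun v' hv' => hcov v' (Finset.mem_insert_of_mem hv')) (Qn o) _ ?_
      intro g hg
      obtain ⟨f, hf, rfl⟩ := Finset.mem_image.mp hg
      have hfJ : f ∈ J := (Finset.mem_filter.mp hf).1
      have hfv : f v = o := (Finset.mem_filter.mp hf).2
      constructor
      · intro w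
        by_cases hw : w = v
        · subst hw
          simp only [hε, Function.update_self]
          simp [hv]
        · rw [hε]
          simp only [Function.update_of_ne hw]
          rw [(hJ f hfJ).1 w, Finset.mem_insert]
          exact ⟨fun h => h.resolve_left hw, Or.inr⟩
      · intro i hi
        by_cases hvi : v ∈ e i
        · have heq : (fun w => if w ∈ e i then ε f w else none)
              = ε (fun w => if w ∈ e i then f w else none) := by
            funext w
            by_cases hw : w = v
            · subst hw
              simp [hε, Function.update_self, hvi]
            · simp [hε, Function.update_of_ne hw]
          rw [hQn]
          simp only [hvi, if_true]
          rw [heq]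
          refine Finset.mem_image_of_mem ε (Finset.mem_filter.mpr ⟨(hJ f hfJ).2 i hi, ?_⟩)
          simp [hvi, hfv]
        · have heq : (fun w => if w ∈ e i then ε f w else none)
              = (fun w => if w ∈ e i then f w else none) := by
            funext w
            by_cases hw : w = v
            · subst hw; simp [hvi]
            · simp [hε, Function.update_of_ne hw]
          rw [hQn]
          simp only [hvi, if_false]
          rw [heq]
          exact (hJ f hfJ).2 i hi
    -- fiber counts in Q
    have hQfib : ∀ i ∈ I, ∑ o ∈ Ω, ((Qn o i).card : ℝ≥0) ≤ ((Q i).card : ℝ≥0) := by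
      intro i hi
      have hvi : v ∈ e i := (Finset.mem_filter.mp hi).2
      have : ∀ o : Option D, (Qn o i).card = ((Q i).filter (fun g => g v = o)).card := by
        intro o
        rw [hQn]
        simp only [hvi, if_true]
        exact Finset.card_image_of_injOn (hinj o (Q i))
      calc ∑ o ∈ Ω, ((Qn o i).card : ℝ≥0)
          = ((∑ o ∈ Ω, ((Q i).filter (fun g => g v = o)).card : ℕ) : ℝ≥0) := by
            push_cast
            exact Finset.sum_congr rfl fun o _ => by rw [this o]
        _ ≤ ((Q i).card : ℝ≥0) := by
            exact_mod_cast my_sum_card_filter_le (Q i) (fun g => g v) Ω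
    -- weights
    set w : ι → ℝ≥0 := fun i => (y i).toNNReal with hw
    have hwcoe : ∀ i ∈ T, (w i : ℝ) = y i := fun i hi => Real.coe_toNNReal _ (hy0 i hi)
    have hw1 : 1 ≤ ∑ i ∈ I, w i := by
      have : ((∑ i ∈ I, w i : ℝ≥0) : ℝ) = ∑ i ∈ I, y i := by
        push_cast
        exact Finset.sum_congr rfl fun i hi => hwcoe i (Finset.mem_filter.mp hi).1
      rw [← NNReal.coe_le_coe, NNReal.coe_one, this]
      exact hs
    -- main chain
    calc (J.card : ℝ≥0)
        = ∑ o ∈ Ω, ((J.filter (fun f => f v = o)).card : ℝ≥0) := by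
          rw [hJcard]; push_cast; ring
      _ ≤ ∑ o ∈ Ω, ∏ i ∈ T, ((Qn o i).card : ℝ≥0) ^ y i := Finset.sum_le_sum hfib
      _ = ∑ o ∈ Ω, (∏ i ∈ I, ((Qn o i).card : ℝ≥0) ^ y i)
            * ∏ i ∈ T.filter (fun i => ¬ v ∈ e i), ((Q i).card : ℝ≥0) ^ y i := by
          refine Finset.sum_congr rfl fun o ho => ?_
          rw [← Finset.prod_filter_mul_prod_filter_not T (fun i => v ∈ e i)]
          congr 1
          refine Finset.prod_congr rfl fun i hi => ?_
          have hvi : ¬ v ∈ e i := (Finset.mem_filter.mp hi).2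
          rw [hQn]
          simp [hvi]
      _ = (∑ o ∈ Ω, ∏ i ∈ I, ((Qn o i).card : ℝ≥0) ^ y i)
            * ∏ i ∈ T.filter (fun i => ¬ v ∈ e i), ((Q i).card : ℝ≥0) ^ y i := by
          rw [Finset.sum_mul]
      _ ≤ (∏ i ∈ I, ((Q i).card : ℝ≥0) ^ y i)
            * ∏ i ∈ T.filter (fun i => ¬ v ∈ e i), ((Q i).card : ℝ≥0) ^ y i := by
          refine mul_le_mul_left ?_ _
          calc ∑ o ∈ Ω, ∏ i ∈ I, ((Qn o i).card : ℝ≥0) ^ y i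
              = ∑ o ∈ Ω, ∏ i ∈ I, ((Qn o i).card : ℝ≥0) ^ (w i : ℝ) := by
                refine Finset.sum_congr rfl fun o ho => Finset.prod_congr rfl fun i hi => ?_
                rw [hwcoe i (Finset.mem_filter.mp hi).1]
            _ ≤ ∏ i ∈ I, (∑ o ∈ Ω, ((Qn o i).card : ℝ≥0)) ^ (w i : ℝ) :=
                my_holder Ω I w (fun i o => ((Qn o i).card : ℝ≥0)) hw1
            _ ≤ ∏ i ∈ I, ((Q i).card : ℝ≥0) ^ (w i : ℝ) := by
                refine Finset.prod_le_prod' ?_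
                intro i hi
                exact NNReal.rpow_le_rpow (hQfib i hi) (w i).coe_nonneg
            _ = ∏ i ∈ I, ((Q i).card : ℝ≥0) ^ y i :=
                Finset.prod_congr rfl fun i hi => by
                  rw [hwcoe i (Finset.mem_filter.mp hi).1]
      _ = ∏ i ∈ T, ((Q i).card : ℝ≥0) ^ y i :=
          Finset.prod_filter_mul_prod_filter_not T (fun i => v ∈ e i) _


/-- **Refined upper bound on the relaxed join** (Theorem 6.7, size bound).
Setting as in Proposition 6.6: `𝒞` is the family of subsets `S` of the edges
with `|S| ≥ m − r` covering `V`, `Chat` its set of inclusion-minimal elements,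
and `qr` the relaxed join.  For each `S ∈ Chat` we are given `T S ⊆ S` covering
`V` together with a fractional edge cover `y (T S)` of `(V, T S)`; the cover
depends only on `T S` (so whenever `T S = T S'` the associated covers agree).
Then `|qr| ≤ ∑_{T'} ∏_{i ∈ T'} |R i| ^ (y T' i)`, the sum ranging over the
distinct sets `T' ∈ {T S : S ∈ Chat}`. -/
theorem relaxed_join_refined_upper_bound
    {V D : Type*} [Fintype V] [DecidableEq V]
    {ι : Type*} [Fintype ι] [DecidableEq ι]
    (e : ι → Finset V) (R : ∀ i, Finset ({v // v ∈ e i} → D))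
    (m r : ℕ) (hm : m = Fintype.card ι) (hr : r ≤ m)
    (𝒞 : Finset (Finset ι))
    (h𝒞 : 𝒞 = Finset.univ.filter
      (fun S : Finset ι => m - r ≤ S.card ∧ ∀ v : V, ∃ i ∈ S, v ∈ e i))
    (Chat : Finset (Finset ι))
    (hChat : Chat = 𝒞.filter (fun S => ∀ T ∈ 𝒞, T ⊆ S → T = S))
    (T : Finset ι → Finset ι)
    (hTsub : ∀ S ∈ Chat, T S ⊆ S)
    (hTcover : ∀ S ∈ Chat, ∀ v : V, ∃ i ∈ T S, v ∈ e i)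
    (y : Finset ι → ι → ℝ)
    (hy0 : ∀ S ∈ Chat, ∀ i ∈ T S, 0 ≤ y (T S) i)
    (hycover : ∀ S ∈ Chat, ∀ v : V,
      1 ≤ ∑ i ∈ (T S).filter (fun i => v ∈ e i), y (T S) i)
    (qr : Set (V → D))
    (hqr : qr = ⋃ S ∈ 𝒞,
      {t : V → D | ∀ i ∈ S, (fun v : {v // v ∈ e i} => t v) ∈ R i}) :
    qr.Finite ∧
    (Nat.card qr : ℝ) ≤ ∑ T' ∈ Chat.image T, ∏ i ∈ T', ((R i).card : ℝ) ^ y T' i := by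
  classical
  have hminimal : ∀ S ∈ 𝒞, ∃ S' ∈ Chat, S' ⊆ S := by
    intro S hS
    obtain ⟨S', hS'mem, hmin⟩ := Finset.exists_min_image (𝒞.filter (· ⊆ S)) Finset.card
      ⟨S, Finset.mem_filter.mpr ⟨hS, subset_rfl⟩⟩
    obtain ⟨hS'𝒞, hS'sub⟩ := Finset.mem_filter.mp hS'mem
    refine ⟨S', ?_, hS'sub⟩
    rw [hChat, Finset.mem_filter]
    refine ⟨hS'𝒞, fun T0 hT0 hT0sub => ?_⟩
    have hT0' : T0 ∈ 𝒞.filter (· ⊆ S) := Finset.mem_filter.mpr ⟨hT0, hT0sub.trans hS'sub⟩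
    exact Finset.eq_of_subset_of_card_le hT0sub (hmin T0 hT0')
  set JSet : Finset ι → Set (V → D) :=
    fun T' => {t : V → D | ∀ i ∈ T', (fun v : {v // v ∈ e i} => t v) ∈ R i} with hJSet
  have key : ∀ S ∈ Chat, (JSet (T S)).Finite ∧
      (((JSet (T S)).ncard : ℝ≥0) ≤ ∏ i ∈ T S, (((R i).card : ℕ) : ℝ≥0) ^ y (T S) i) := by
    intro S hS
    choose c hc1 hc2 using hTcover S hS
    have hsub : JSet (T S) ⊆ Set.pi Set.univ
        (fun v => (fun ρ : {x // x ∈ e (c v)} → D => ρ ⟨v, hc2 v⟩) '' ((R (c v) : Set _))) := by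
      intro t ht v _
      exact ⟨_, ht (c v) (hc1 v), rfl⟩
    have hfin : (JSet (T S)).Finite :=
      Set.Finite.subset (Set.Finite.pi fun v => ((R (c v)).finite_toSet.image _)) hsub
    refine ⟨hfin, ?_⟩
    set JF := hfin.toFinset with hJF
    set Φ : (V → D) → (V → Option D) := fun t v => some (t v) with hΦ
    have hΦinj : Function.Injective Φ := by
      intro t t' h
      funext v
      have := congrFun h v
      simpa [hΦ] using this
    set Q : ι → Finset (V → Option D) :=
      fun i => (R i).image
        (fun ρ => fun v => if h : v ∈ e i then some (ρ ⟨v, h⟩) else none) with hQ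
    have hmain : ((JF.image Φ).card : ℝ≥0) ≤ ∏ i ∈ T S, ((Q i).card : ℝ≥0) ^ y (T S) i := by
      refine agm_count e (T S) (y (T S)) (hy0 S hS) Finset.univ
        (fun v _ => hycover S hS v) Q (JF.image Φ) ?_
      intro f hf
      obtain ⟨t, htJF, rfl⟩ := Finset.mem_image.mp hf
      have ht : t ∈ JSet (T S) := hfin.mem_toFinset.mp htJF
      constructor
      · intro v
        simp [hΦ]
      · intro i hi
        refine Finset.mem_image.mpr ⟨fun w : {v // v ∈ e i} => t w, ht i hi, ?_⟩
        funext v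
        by_cases h : v ∈ e i <;> simp [hΦ, h]
    have hcard : (JF.image Φ).card = (JSet (T S)).ncard := by
      rw [Finset.card_image_of_injective _ hΦinj, hJF]
      exact (Set.ncard_eq_toFinset_card _ hfin).symm
    calc ((JSet (T S)).ncard : ℝ≥0) = ((JF.image Φ).card : ℝ≥0) := by rw [hcard]
      _ ≤ ∏ i ∈ T S, ((Q i).card : ℝ≥0) ^ y (T S) i := hmain
      _ ≤ ∏ i ∈ T S, (((R i).card : ℕ) : ℝ≥0) ^ y (T S) i := by
          refine Finset.prod_le_prod' fun i hi => ?_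
          refine NNReal.rpow_le_rpow ?_ (hy0 S hS i hi)
          exact_mod_cast Finset.card_image_le
  have hcover' : qr ⊆ ⋃ T' ∈ Chat.image T, JSet T' := by
    intro t ht
    rw [hqr] at ht
    simp only [Set.mem_iUnion, Set.mem_setOf_eq] at ht
    obtain ⟨S, hS, htS⟩ := ht
    obtain ⟨S', hS', hS'sub⟩ := hminimal S hS
    have htS' : t ∈ JSet (T S') := fun i hi => htS i (hS'sub (hTsub S' hS' hi))
    simp only [Set.mem_iUnion]
    exact ⟨T S', Finset.mem_image_of_mem T hS', htS'⟩
  have hfinU : (⋃ T' ∈ Chat.image T, JSet T').Finite := by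
    rw [← Finset.set_biUnion_coe]
    refine Set.Finite.biUnion (Chat.image T).finite_toSet ?_
    intro T' hT'
    obtain ⟨S, hS, rfl⟩ := Finset.mem_image.mp (Finset.mem_coe.mp hT')
    exact (key S hS).1
  have hq : qr.Finite := hfinU.subset hcover'
  refine ⟨hq, ?_⟩
  have h1 : ((Nat.card qr : ℕ) : ℝ≥0)
      ≤ ∑ T' ∈ Chat.image T, ∏ i ∈ T', (((R i).card : ℕ) : ℝ≥0) ^ y T' i := by
    rw [Nat.card_coe_set_eq]
    calc ((qr.ncard : ℕ) : ℝ≥0)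
        ≤ (((⋃ T' ∈ Chat.image T, JSet T').ncard : ℕ) : ℝ≥0) := by
          exact_mod_cast Set.ncard_le_ncard hcover' hfinU
      _ ≤ ((∑ T' ∈ Chat.image T, (JSet T').ncard : ℕ) : ℝ≥0) := by
          exact_mod_cast my_ncard_biUnion_le (Chat.image T) JSet
      _ ≤ ∑ T' ∈ Chat.image T, ∏ i ∈ T', (((R i).card : ℕ) : ℝ≥0) ^ y T' i := by
          push_cast
          refine Finset.sum_le_sum fun T' hT' => ?_
          obtain ⟨S, hS, rfl⟩ := Finset.mem_image.mp hT'
          exact (key S hS).2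
  calc (Nat.card qr : ℝ) = (((Nat.card qr : ℕ) : ℝ≥0) : ℝ) := by push_cast; ring
    _ ≤ ((∑ T' ∈ Chat.image T, ∏ i ∈ T', (((R i).card : ℕ) : ℝ≥0) ^ y T' i : ℝ≥0) : ℝ) := by
        exact_mod_cast h1
    _ = ∑ T' ∈ Chat.image T, ∏ i ∈ T', ((R i).card : ℝ) ^ y T' i := by
        push_cast [NNReal.coe_rpow]
        rfl
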